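/- Let T be a k-uniform hypertree with k ≥ 3. Then for every vertex v ∈ V(T), the degree d_T(v) is an eigenvalue of the Laplacian tensor L(T) and also an eigenvalue of the signless Laplacian tensor Q(T). -/

import Mathlib

/-!
Weighted uniform hypergraphs, their adjacency tensors, eigenvalues,
matchings and matching polynomials, following Wan–Wang–Hu,
"Spectra of weighted uniform hypertrees".
-/

open Finset

open scoped Classical

/-- A hypergraph on a vertex type `V`: a finite vertex set together with a
finite set of edges (each edge being a finite set of vertices). -/
structure WHypergraph (V : Type*) where
  verts : Finset V
  edges : Finset (Finset V)

namespace WHypergraph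

variable {V : Type*} [Fintype V] [DecidableEq V]

/-- `H` is a `k`-uniform hypergraph: every edge is a `k`-element subset of the
vertex set. -/
def IsUniform (H : WHypergraph V) (k : ℕ) : Prop :=
  (∀ e ∈ H.edges, e ⊆ H.verts) ∧ ∀ e ∈ H.edges, e.card = k

/-- Two vertices lie in a common edge (one step of a walk). -/
def Adj (H : WHypergraph V) (a b : V) : Prop :=
  ∃ e ∈ H.edges, a ∈ e ∧ b ∈ e

/-- Every two vertices of `H` are joined by a walk. -/
def Connected (H : WHypergraph V) : Prop :=
  ∀ u ∈ H.verts, ∀ v ∈ H.verts, Relation.ReflTransGen H.Adj u v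

/-- The data `v_0, e_1, v_1, …, e_ℓ, v_ℓ (= v_0)` (re-indexed from `0`, with
`v (i) , v (i+1 mod ℓ) ∈ e i`) form a cycle of `H`: a closed walk with no
repeated vertices and no repeated edges. -/
def IsCycleIn (H : WHypergraph V) (ℓ : ℕ) (v : ℕ → V) (e : ℕ → Finset V) : Prop :=
  2 ≤ ℓ ∧
  (∀ i < ℓ, ∀ j < ℓ, v i = v j → i = j) ∧
  (∀ i < ℓ, ∀ j < ℓ, e i = e j → i = j) ∧
  (∀ i < ℓ, e i ∈ H.edges) ∧
  (∀ i < ℓ, v i ∈ e i ∧ v ((i + 1) % ℓ) ∈ e i)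

/-- `H` contains a cycle. -/
def HasCycle (H : WHypergraph V) : Prop := ∃ ℓ v e, H.IsCycleIn ℓ v e

/-- A `k`-uniform hypertree: a connected acyclic `k`-uniform hypergraph. -/
def IsHypertree (H : WHypergraph V) (k : ℕ) : Prop :=
  H.verts.Nonempty ∧ H.IsUniform k ∧ H.Connected ∧ ¬H.HasCycle

/-- The degree of a vertex: the number of edges containing it. -/
def degree (H : WHypergraph V) (v : V) : ℕ :=
  (H.edges.filter fun e => v ∈ e).card

/-- The subgraph induced by a vertex subset `U`. -/
def induce (H : WHypergraph V) (U : Finset V) : WHypergraph V :=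
  ⟨U, H.edges.filter fun e => e ⊆ U⟩

/-- `T'` is a subtree of `T`: an induced subgraph of `T` which is itself a
`k`-uniform hypertree. -/
def IsSubtree (T T' : WHypergraph V) (k : ℕ) : Prop :=
  (∃ U : Finset V, U ⊆ T.verts ∧ T' = T.induce U) ∧ T'.IsHypertree k

/-- Delete the edge `e` from `H` together with the resulting isolated
vertices (the vertices of `e` that lie in no other edge). -/
def delEdge (H : WHypergraph V) (e : Finset V) : WHypergraph V :=
  ⟨H.verts \ e.filter (fun v => H.degree v = 1), H.edges.erase e⟩

/-- A pendant edge of a `k`-uniform hypergraph: an edge containing exactly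
`k - 1` vertices of degree one. -/
def IsPendant (H : WHypergraph V) (k : ℕ) (e : Finset V) : Prop :=
  e ∈ H.edges ∧ (e.filter fun v => H.degree v = 1).card = k - 1

/-- The entry `a_{t 0, t 1, …, t m}` of the adjacency tensor (of order `m + 1`)
of the weighted hypergraph `(H, w)`, where `wv` is the weighting on vertices and
`we` the weighting on edges: it equals `w(v)` on the diagonal entry of a vertex
`v`, `w(e)/(k-1)!` if the indices enumerate an edge `e` (here `k = m + 1`), and
`0` otherwise. -/
noncomputable def adjEntry (H : WHypergraph V) (wv : V → ℂ) (we : Finset V → ℂ)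
    {m : ℕ} (t : Fin (m + 1) → V) : ℂ :=
  if (∀ i, t i = t 0) ∧ t 0 ∈ H.verts then wv (t 0)
  else if Function.Injective t ∧ Finset.univ.image t ∈ H.edges then
    we (Finset.univ.image t) / (Nat.factorial m : ℂ)
  else 0

/-- `(lam, x)` is an eigenpair of the adjacency tensor (of order `k`) of
`(H, w)`: `x` is nonzero (as a vector indexed by the vertices) and for every
vertex `v`, `∑_{i_2,…,i_k} a_{v i_2 … i_k} x_{i_2} ⋯ x_{i_k} = lam * x_v^(k-1)`. -/
def IsEigenpair (H : WHypergraph V) (wv : V → ℂ) (we : Finset V → ℂ) (k : ℕ)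
    (lam : ℂ) (x : V → ℂ) : Prop :=
  (∃ v ∈ H.verts, x v ≠ 0) ∧
  ∀ v ∈ H.verts,
    ∑ t : Fin (k - 1) → V, H.adjEntry wv we (Fin.cons v t) * ∏ i, x (t i)
      = lam * x v ^ (k - 1)

/-- `lam` is an eigenvalue of the adjacency tensor of `(H, w)`. -/
def IsEigenvalue (H : WHypergraph V) (wv : V → ℂ) (we : Finset V → ℂ) (k : ℕ)
    (lam : ℂ) : Prop :=
  ∃ x : V → ℂ, H.IsEigenpair wv we k lam x

/-- The spectral radius of the adjacency tensor of `(H, w)`: the largest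
modulus of its eigenvalues. -/
noncomputable def spectralRadius (H : WHypergraph V) (wv : V → ℂ) (we : Finset V → ℂ)
    (k : ℕ) : ℝ :=
  sSup ((fun z : ℂ => ‖z‖) '' {lam | H.IsEigenvalue wv we k lam})

/-- The set of matchings of `H`: sets of pairwise vertex-disjoint edges
(including the empty matching). -/
noncomputable def matchings (H : WHypergraph V) : Finset (Finset (Finset V)) :=
  H.edges.powerset.filter fun M => ∀ e ∈ M, ∀ f ∈ M, e ≠ f → Disjoint e f

/-- `V(M)`: the set of vertices covered by the matching `M`. -/
def mVerts (M : Finset (Finset V)) : Finset V := M.biUnion id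

/-- The weighted matching polynomial
`μ(H,w,x) = ∑_{M ∈ M(H)} (−1)^{|M|} ∏_{e ∈ M} w(e)^k ∏_{v ∈ V(H)∖V(M)} (x − w(v))`,
evaluated at `x`. -/
noncomputable def matchPoly (H : WHypergraph V) (wv : V → ℂ) (we : Finset V → ℂ)
    (k : ℕ) (x : ℂ) : ℂ :=
  ∑ M ∈ H.matchings,
    (-1 : ℂ) ^ M.card * (∏ e ∈ M, we e ^ k) * ∏ v ∈ H.verts \ mVerts M, (x - wv v)

/-- The matching number: the maximum size of a matching of `H`. -/
noncomputable def matchingNumber (H : WHypergraph V) : ℕ := H.matchings.sup Finset.card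

/-- The polynomial `φ(H,x) = ∑_{i ≥ 0} (−1)^i p(H,i) x^{(m(H)−i)k}` where
`p(H,i)` is the number of `i`-matchings, written as a sum over all matchings,
evaluated at `x`. -/
noncomputable def phiPoly (H : WHypergraph V) (k : ℕ) (x : ℂ) : ℂ :=
  ∑ M ∈ H.matchings, (-1 : ℂ) ^ M.card * x ^ ((H.matchingNumber - M.card) * k)

/-- `B` is a weighted vertex-edge incidence matrix of `H`: rows indexed by
vertices, columns by edges, with `B(v,e) ≠ 0` iff `v ∈ e`. -/
def IsWIM (H : WHypergraph V) (B : V → Finset V → ℂ) : Prop :=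
  ∀ v ∈ H.verts, ∀ e ∈ H.edges, (B v e ≠ 0 ↔ v ∈ e)

/-- `(H, w)` is `{λ_e}`-normal with respect to the weighted incidence matrix `B`:
(C1) `∑_{e ∋ v} B(v,e) = 1` for every vertex `v`, and
(C2) `∏_{u ∈ e} B(u,e) = ∏_{u ∈ e} w(e)/(λ_e − w(u))` for every edge `e`. -/
def IsFamilyNormalWith (H : WHypergraph V) (wv : V → ℂ) (we : Finset V → ℂ)
    (lam : Finset V → ℂ) (B : V → Finset V → ℂ) : Prop :=
  H.IsWIM B ∧
  (∀ v ∈ H.verts, ∑ e ∈ H.edges.filter (fun e => v ∈ e), B v e = 1) ∧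
  (∀ e ∈ H.edges, ∏ u ∈ e, B u e = ∏ u ∈ e, we e / (lam e - wv u))

/-- `(H, w)` is `{λ_e}`-normal (with respect to some weighted incidence matrix). -/
def IsFamilyNormal (H : WHypergraph V) (wv : V → ℂ) (we : Finset V → ℂ)
    (lam : Finset V → ℂ) : Prop :=
  ∃ B : V → Finset V → ℂ, H.IsFamilyNormalWith wv we lam B

/-- `(H, w)` is consistently `λ`-normal: it is `λ`-normal with respect to some
weighted incidence matrix `B` which moreover satisfies (C3): for every cycle
`v_0, e_1, v_1, …, e_ℓ, v_ℓ (= v_0)`,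
`∏_{i=1}^{ℓ} [B(v_i,e_i)(λ − w(v_i))]/[B(v_{i−1},e_i)(λ − w(v_{i−1}))] = 1`. -/
def IsConsistentlyNormal (H : WHypergraph V) (wv : V → ℂ) (we : Finset V → ℂ)
    (lam : ℂ) : Prop :=
  ∃ B : V → Finset V → ℂ, H.IsFamilyNormalWith wv we (fun _ => lam) B ∧
    ∀ ℓ v e, H.IsCycleIn ℓ v e →
      ∏ i ∈ Finset.range ℓ,
        (B (v ((i + 1) % ℓ)) (e i) * (lam - wv (v ((i + 1) % ℓ)))) /
          (B (v i) (e i) * (lam - wv (v i))) = 1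

/-- An arc of the digraph `D(A)` associated with the adjacency tensor (of order
`k`) of `(H,w)`: there is a nonzero entry `a_{p i_2 … i_k}` with some `i_j = q`. -/
def TensorArc (H : WHypergraph V) (wv : V → ℂ) (we : Finset V → ℂ) (k : ℕ)
    (p q : V) : Prop :=
  ∃ t : Fin (k - 1) → V, H.adjEntry wv we (Fin.cons p t) ≠ 0 ∧ ∃ j, t j = q

/-- The adjacency tensor of `(H,w)` is weakly irreducible: the associated
digraph `D(A)` is strongly connected on the vertex set of `H`. -/
def WeaklyIrreducible (H : WHypergraph V) (wv : V → ℂ) (we : Finset V → ℂ)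
    (k : ℕ) : Prop :=
  ∀ a ∈ H.verts, ∀ b ∈ H.verts, Relation.ReflTransGen (H.TensorArc wv we k) a b

end WHypergraph

/-- For a `k`-uniform hypertree `T` with `k ≥ 3`, the degree
`d_T(v)` of any vertex `v` is an eigenvalue of the Laplacian tensor `L(T)`
(the adjacency tensor of `(T,w)` with `w(u) = d_T(u)` on vertices and
`w(e) = -1` on edges) and of the signless Laplacian tensor `Q(T)`
(`w(e) = 1` on edges). -/
theorem degree_is_laplacian_and_signless_laplacian_eigenvalue
    {V : Type*} [Fintype V] [DecidableEq V]
    (T : WHypergraph V) (k : ℕ) (hk : 3 ≤ k) (hT : T.IsHypertree k) :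
    ∀ v ∈ T.verts,
      T.IsEigenvalue (fun u => (T.degree u : ℂ)) (fun _ => -1) k ((T.degree v : ℂ)) ∧
      T.IsEigenvalue (fun u => (T.degree u : ℂ)) (fun _ => 1) k ((T.degree v : ℂ)) := by
  intro v hv
  have key : ∀ we : Finset V → ℂ,
      T.IsEigenvalue (fun u => (T.degree u : ℂ)) we k ((T.degree v : ℂ)) := by
    intro we
    refine ⟨fun u => if u = v then 1 else 0, ⟨v, hv, by simp⟩, ?_⟩
    intro u hu
    have hprod : ∀ t : Fin (k - 1) → V,
        (∏ i, (if t i = v then (1:ℂ) else 0)) = if t = (fun _ => v) then 1 else 0 := by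
      intro t
      by_cases h : t = fun _ => v
      · subst h; simp
      · rw [if_neg h]
        obtain ⟨i, hi⟩ : ∃ i, t i ≠ v := by
          by_contra hc; push_neg at hc; exact h (funext hc)
        exact Finset.prod_eq_zero (Finset.mem_univ i) (by simp [hi])
    have hsum : ∑ t : Fin (k - 1) → V,
        T.adjEntry (fun u => (T.degree u : ℂ)) we (Fin.cons u t) * ∏ i, (if t i = v then (1:ℂ) else 0)
        = T.adjEntry (fun u => (T.degree u : ℂ)) we (Fin.cons u (fun _ : Fin (k - 1) => v)) := by
      rw [Finset.sum_congr rfl (fun t _ => by rw [hprod t])]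
      simp only [mul_ite, mul_one, mul_zero]
      rw [Finset.sum_ite_eq' Finset.univ (fun _ => v)
        (fun t => T.adjEntry (fun u => (T.degree u : ℂ)) we (Fin.cons u t))]
      simp
    simp only [hsum]
    by_cases huv : u = v
    · subst huv
      have hc : (Fin.cons u (fun _ : Fin (k - 1) => u) : Fin (k - 1 + 1) → V) = fun _ => u := by
        funext i
        refine Fin.cases ?_ ?_ i <;> simp
      rw [hc]
      unfold WHypergraph.adjEntry
      rw [if_pos ⟨fun _ => rfl, hv⟩]
      simp
    · have hk2 : 2 ≤ k - 1 := by omega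
      have h0 : (Fin.cons u (fun _ : Fin (k - 1) => v) : Fin (k - 1 + 1) → V) 0 = u := rfl
      have hne : ¬ (∀ i, (Fin.cons u (fun _ : Fin (k - 1) => v) : Fin (k - 1 + 1) → V) i =
          (Fin.cons u (fun _ : Fin (k - 1) => v) : Fin (k - 1 + 1) → V) 0) := by
        intro h
        have := h (Fin.succ ⟨0, by omega⟩)
        simp [h0] at this
        exact huv this.symm
      have hni : ¬ Function.Injective (Fin.cons u (fun _ : Fin (k - 1) => v) : Fin (k - 1 + 1) → V) := by
        intro h
        set t : Fin (k - 1 + 1) → V := Fin.cons u (fun _ : Fin (k - 1) => v) with ht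
        have e1 : t (Fin.succ ⟨0, by omega⟩) = t (Fin.succ ⟨1, by omega⟩) := by
          rw [ht]; simp only [Fin.cons_succ]
        have : (Fin.succ (⟨0, by omega⟩ : Fin (k-1)) : Fin (k-1+1)) =
            Fin.succ (⟨1, by omega⟩ : Fin (k-1)) := h e1
        simp [Fin.ext_iff] at this
      unfold WHypergraph.adjEntry
      rw [if_neg (by tauto), if_neg (by tauto)]
      rw [if_neg huv]
      rw [zero_pow (by omega : k - 1 ≠ 0)]
      ring
  exact ⟨key _, key _⟩
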